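/- Let f be a transcendental entire function, and suppose V is an unbounded component of the Fatou set F(f) that is not periodic (i.e., f^n(V) is not contained in V for any n ≥ 1). Let R > 0 be such that the disc B(0,R) meets J(f). Then infinitely many distinct preimages of V (connected components of f^{-n}(V) over all n ≥ 1) meet B(0,R). -/

import Mathlib

open Filter Topology Set Bornology

noncomputable section

/-- `f : ℂ → ℂ` is a transcendental entire function: it is differentiable on all of `ℂ`
and is not a polynomial. -/
def TranscendentalEntire (f : ℂ → ℂ) : Prop :=
  Differentiable ℂ f ∧ ¬ ∃ p : Polynomial ℂ, ∀ z, f z = p.eval z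

/-- The spherical (chordal) metric on the Riemann sphere `ℂ ∪ {∞}`, realised as `OnePoint ℂ`. -/
noncomputable def sphericalDist : OnePoint ℂ → OnePoint ℂ → ℝ := fun u v =>
  match u, v with
  | (some z), (some w) => 2 * dist z w / (Real.sqrt (1 + ‖z‖ ^ 2) * Real.sqrt (1 + ‖w‖ ^ 2))
  | (some z), none => 2 / Real.sqrt (1 + ‖z‖ ^ 2)
  | none, (some w) => 2 / Real.sqrt (1 + ‖w‖ ^ 2)
  | none, none => 0

/-- The Fatou set of `f`: the set of points `z` having a neighbourhood `U` on which the
family of iterates of `f` is normal, i.e. every sequence of iterates has a subsequence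
converging uniformly on every compact subset of `U` (hence locally uniformly on `U`)
with respect to the spherical metric on the Riemann sphere `ℂ ∪ {∞}`. -/
def FatouSet (f : ℂ → ℂ) : Set ℂ :=
  {z | ∃ U ∈ 𝓝 z, ∀ s : ℕ → ℕ, StrictMono s → ∃ t : ℕ → ℕ, StrictMono t ∧
    ∃ g : ℂ → OnePoint ℂ, ∀ K ⊆ U, IsCompact K → ∀ ε > 0, ∀ᶠ k in atTop,
      ∀ w ∈ K, sphericalDist (f^[s (t k)] w : ℂ) (g w) < ε}

/-- The Julia set of `f` is the complement of the Fatou set. -/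
def JuliaSet (f : ℂ → ℂ) : Set ℂ := (FatouSet f)ᶜ

/-- `U` is a Fatou component of `f`: a connected component of the Fatou set. -/
def IsFatouComponent (f : ℂ → ℂ) (U : Set ℂ) : Prop :=
  ∃ z ∈ FatouSet f, U = connectedComponentIn (FatouSet f) z

/-- A set `E ⊆ ℂ` is a spider's web if it is connected and there is a sequence of bounded,
simply connected domains `G k` with `G k ⊆ G (k+1)`, `∂(G k) ⊆ E`, and `⋃ k, G k = ℂ`. -/
def SpidersWeb (E : Set ℂ) : Prop :=
  IsConnected E ∧ ∃ G : ℕ → Set ℂ,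
    (∀ k, IsOpen (G k) ∧ IsConnected (G k) ∧ IsBounded (G k) ∧ SimplyConnectedSpace (G k)) ∧
    (∀ k, G k ⊆ G (k + 1)) ∧ (∀ k, frontier (G k) ⊆ E) ∧ (⋃ k, G k) = univ

/-- `X` is locally connected at `z`: every neighbourhood of `z` in the subspace `X`
contains a connected (not necessarily open) neighbourhood of `z` in `X`. -/
def LocallyConnectedAt (X : Set ℂ) (z : ℂ) : Prop :=
  ∀ V ∈ 𝓝[X] z, ∃ W ∈ 𝓝[X] z, W ⊆ V ∧ W ⊆ X ∧ IsConnected W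

/-- `z` is a buried point of `f`: it lies in the Julia set but not on the boundary of
any Fatou component. -/
def BuriedPoint (f : ℂ → ℂ) (z : ℂ) : Prop :=
  z ∈ JuliaSet f ∧ ∀ U : Set ℂ, IsFatouComponent f U → z ∉ frontier U

/-- The residual Julia set: the set of buried points. -/
def ResidualJuliaSet (f : ℂ → ℂ) : Set ℂ := {z | BuriedPoint f z}

/-- A set `S ⊆ ℂ` surrounds a point `z` if `z` lies in a bounded connected component of
the complement of `S`. -/
def Surrounds (S : Set ℂ) (z : ℂ) : Prop :=
  z ∈ Sᶜ ∧ IsBounded (connectedComponentIn Sᶜ z)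

/-- A Jordan curve: a subset of `ℂ` homeomorphic to a circle. -/
def IsJordanCurve (C : Set ℂ) : Prop :=
  Nonempty (C ≃ₜ Metric.sphere (0 : ℂ) 1)

/-- The spherical diameter of a subset of `ℂ`, with respect to the chordal metric on the
Riemann sphere. -/
noncomputable def sphericalDiam (S : Set ℂ) : ℝ :=
  sSup ((fun p : ℂ × ℂ => sphericalDist (p.1 : OnePoint ℂ) (p.2 : OnePoint ℂ)) '' (S ×ˢ S))

lemma sphericalDist_coe_coe (z w : ℂ) :
    sphericalDist (z : OnePoint ℂ) (w : OnePoint ℂ)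
      = 2 * dist z w / (Real.sqrt (1 + ‖z‖ ^ 2) * Real.sqrt (1 + ‖w‖ ^ 2)) := rfl

lemma sphericalDist_coe_none (z : ℂ) :
    sphericalDist (z : OnePoint ℂ) (none : OnePoint ℂ) = 2 / Real.sqrt (1 + ‖z‖ ^ 2) := rfl

lemma shift_bound (a z : ℂ) : ‖z‖ ≤ Real.sqrt (2*(1+‖a‖^2)) * Real.sqrt (1+‖a+z‖^2) := by
  rw [← Real.sqrt_mul (by positivity)]
  rw [show ‖z‖ = Real.sqrt (‖z‖^2) by rw [Real.sqrt_sq (norm_nonneg _)]]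
  apply Real.sqrt_le_sqrt
  have h : ‖z‖ ≤ ‖a + z‖ + ‖a‖ := by
    calc ‖z‖ = ‖(a + z) - a‖ := by ring_nf
    _ ≤ ‖a + z‖ + ‖a‖ := norm_sub_le _ _
  have h2 : ‖z‖^2 ≤ (‖a + z‖ + ‖a‖)^2 := by
    have := norm_nonneg z
    nlinarith
  nlinarith [h2, sq_nonneg (‖a + z‖ - ‖a‖), sq_nonneg (‖a‖ * ‖a + z‖)]

lemma key_est (a : ℂ) {u : ℂ} (v : ℂ) (hu : u ≠ 0) :
    sphericalDist ((a + u⁻¹ : ℂ) : OnePoint ℂ)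
      (if v = 0 then (none : OnePoint ℂ) else ((a + v⁻¹ : ℂ) : OnePoint ℂ))
      ≤ 4 * (1 + ‖a‖ ^ 2) * ‖u - v‖ := by
  set c := 1 + ‖a‖ ^ 2 with hcdef
  have hc : 1 ≤ c := by nlinarith [sq_nonneg ‖a‖]
  set s := Real.sqrt (2 * c) with hsdef
  have hs2 : s ^ 2 = 2 * c := Real.sq_sqrt (by positivity)
  have hs1 : 1 ≤ s := by
    rw [hsdef, show (1:ℝ) = Real.sqrt 1 by simp]
    exact Real.sqrt_le_sqrt (by linarith)
  have hu' : (0:ℝ) < ‖u‖ := norm_pos_iff.2 hu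
  set A := Real.sqrt (1 + ‖a + u⁻¹‖ ^ 2) with hAdef
  have hA : 0 < A := Real.sqrt_pos.2 (by positivity)
  have hAu : ‖u‖⁻¹ ≤ s * A := by
    have := shift_bound a u⁻¹
    rwa [norm_inv] at this
  have h1 : 1 ≤ s * A * ‖u‖ := by
    have h := mul_le_mul_of_nonneg_right hAu hu'.le
    rwa [inv_mul_cancel₀ hu'.ne'] at h
  by_cases hv : v = 0
  · subst hv
    refine (le_of_eq (congrArg (sphericalDist ((a + u⁻¹ : ℂ) : OnePoint ℂ)) (show (if (0:ℂ) = 0 then (none : OnePoint ℂ) else ((a + (0:ℂ)⁻¹ : ℂ) : OnePoint ℂ)) = (none : OnePoint ℂ) from if_pos rfl))).trans ?_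
    rw [sphericalDist_coe_none, sub_zero, ← hAdef, div_le_iff₀ hA]
    nlinarith [mul_le_mul_of_nonneg_left h1 (by linarith : (0:ℝ) ≤ s), hs2, hA.le, hu'.le]
  · refine (le_of_eq (congrArg (sphericalDist ((a + u⁻¹ : ℂ) : OnePoint ℂ)) (show (if v = 0 then (none : OnePoint ℂ) else ((a + v⁻¹ : ℂ) : OnePoint ℂ)) = ((a + v⁻¹ : ℂ) : OnePoint ℂ) from if_neg hv))).trans ?_
    rw [sphericalDist_coe_coe, ← hAdef]
    set B := Real.sqrt (1 + ‖a + v⁻¹‖ ^ 2) with hBdef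
    have hB : 0 < B := Real.sqrt_pos.2 (by positivity)
    have hv' : (0:ℝ) < ‖v‖ := norm_pos_iff.2 hv
    have hBv : ‖v‖⁻¹ ≤ s * B := by
      have := shift_bound a v⁻¹
      rwa [norm_inv] at this
    have h2 : 1 ≤ s * B * ‖v‖ := by
      have h := mul_le_mul_of_nonneg_right hBv hv'.le
      rwa [inv_mul_cancel₀ hv'.ne'] at h
    have hdist : dist (a + u⁻¹) (a + v⁻¹) = ‖u - v‖ / (‖u‖ * ‖v‖) := by
      rw [dist_add_left, dist_eq_norm,
        show u⁻¹ - v⁻¹ = (v - u) * (u⁻¹ * v⁻¹) by field_simp,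
        norm_mul, norm_mul, norm_inv, norm_inv, norm_sub_rev]
      field_simp
    rw [hdist, div_le_iff₀ (by positivity), mul_div_assoc', div_le_iff₀ (by positivity)]
    have h3 : 1 ≤ (s * A * ‖u‖) * (s * B * ‖v‖) := by nlinarith
    have h4 := mul_le_mul_of_nonneg_left h3 (by positivity : (0:ℝ) ≤ 2 * ‖u - v‖)
    have h5 : 2 * ‖u - v‖ * (s * A * ‖u‖ * (s * B * ‖v‖))
        = 2 * ‖u - v‖ * (s ^ 2 * (A * B) * (‖u‖ * ‖v‖)) := by ring
    rw [hs2] at h5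
    linarith [h4, h5]

lemma fatou_isOpen (f : ℂ → ℂ) : IsOpen (FatouSet f) := by
  rw [isOpen_iff_mem_nhds]
  rintro z ⟨U, hU, hP⟩
  rw [mem_nhds_iff]
  refine ⟨interior U, fun y hy => ?_, isOpen_interior, mem_interior_iff_mem_nhds.mpr hU⟩
  exact ⟨U, mem_nhds_iff.mpr ⟨interior U, interior_subset, isOpen_interior, hy⟩, hP⟩

lemma fatou_fwd (f : ℂ → ℂ) (hd : Differentiable ℂ f)
    (hop : ∀ s : Set ℂ, IsOpen s → IsOpen (f '' s)) :
    f '' FatouSet f ⊆ FatouSet f := by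
  rintro _ ⟨z, hz, rfl⟩
  obtain ⟨U, hU, hP⟩ := hz
  obtain ⟨r, hr, hball⟩ := Metric.nhds_basis_closedBall.mem_iff.mp hU
  refine ⟨f '' Metric.ball z r, (hop _ Metric.isOpen_ball).mem_nhds
    ⟨z, Metric.mem_ball_self hr, rfl⟩, ?_⟩
  intro s hs
  obtain ⟨t, ht, g, hg⟩ := hP (fun k => s k + 1) (fun a b hab => by
    exact Nat.add_lt_add_right (hs hab) 1)
  classical
  refine ⟨t, ht, fun ζ => if hζ : ζ ∈ f '' Metric.closedBall z r
    then g (((Set.mem_image _ _ _).mp hζ).choose) else none, ?_⟩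
  intro K hK hKc ε hε
  have hK'c : IsCompact (f ⁻¹' K ∩ Metric.closedBall z r) :=
    (isCompact_closedBall z r).inter_left (hKc.isClosed.preimage hd.continuous)
  have hK'U : f ⁻¹' K ∩ Metric.closedBall z r ⊆ U := fun x hx => hball hx.2
  filter_upwards [hg _ hK'U hK'c ε hε] with k hk ζ hζK
  have hζim : ζ ∈ f '' Metric.closedBall z r :=
    Set.image_mono Metric.ball_subset_closedBall (hK hζK)
  rw [show (if hζ : ζ ∈ f '' Metric.closedBall z r then g (((Set.mem_image _ _ _).mp hζ).choose) else none) = g (((Set.mem_image _ _ _).mp hζim).choose) from dif_pos hζim]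
  obtain ⟨hx1, hx2⟩ := ((Set.mem_image _ _ _).mp hζim).choose_spec
  have hxK' : ((Set.mem_image _ _ _).mp hζim).choose ∈ f ⁻¹' K ∩ Metric.closedBall z r :=
    ⟨by rw [Set.mem_preimage, hx2]; exact hζK, hx1⟩
  have h := hk _ hxK'
  rwa [show f^[s (t k)] ζ = f^[s (t k) + 1] (((Set.mem_image _ _ _).mp hζim).choose) by
    rw [Function.iterate_succ_apply, hx2]]

lemma mem_fatou_of_omits (f : ℂ → ℂ) (hd : Differentiable ℂ f) {R : ℝ} {a : ℂ} {r : ℝ}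
    (hr : 0 < r) (N : ℕ) {z₀ : ℂ} (hz₀ : z₀ ∈ Metric.ball (0:ℂ) R)
    (H : ∀ n, N ≤ n → ∀ w ∈ Metric.ball (0:ℂ) R, f^[n] w ∉ Metric.ball a r) :
    z₀ ∈ FatouSet f := by
  classical
  obtain ⟨ρ, hρ, hsub⟩ := Metric.isOpen_iff.mp Metric.isOpen_ball z₀ hz₀
  set δ := ρ / 5 with hδdef
  have hδ : 0 < δ := by positivity
  set D := Metric.closedBall z₀ δ with hDdef
  have hDsub : D ⊆ Metric.ball (0:ℂ) R := fun x hx => hsub (by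
    rw [Metric.mem_ball]
    have := Metric.mem_closedBall.mp hx
    linarith)
  set M := r⁻¹ with hMdef
  have hM : 0 < M := by positivity
  set h : ℕ → ℂ → ℂ := fun n w => (f^[n] w - a)⁻¹ with hhdef
  -- basic facts for n ≥ N
  have F1 : ∀ n, N ≤ n → ∀ w ∈ Metric.ball (0:ℂ) R, r ≤ ‖f^[n] w - a‖ := by
    intro n hn w hw
    have := H n hn w hw
    rw [Metric.mem_ball, dist_eq_norm] at this
    linarith [not_lt.mp this]
  have F2 : ∀ n, N ≤ n → ∀ w ∈ Metric.ball (0:ℂ) R, f^[n] w - a ≠ 0 := by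
    intro n hn w hw
    have := F1 n hn w hw
    intro hcon
    rw [hcon, norm_zero] at this
    linarith
  have F3 : ∀ n, N ≤ n → ∀ w ∈ Metric.ball (0:ℂ) R, ‖h n w‖ ≤ M := by
    intro n hn w hw
    rw [hhdef]
    simp only [norm_inv]
    exact inv_anti₀ hr (F1 n hn w hw)
  have F4 : ∀ n, N ≤ n → DifferentiableOn ℂ (h n) (Metric.ball (0:ℂ) R) := by
    intro n hn
    exact DifferentiableOn.inv
      (((hd.iterate n).differentiableOn).sub_const a) (F2 n hn)
  -- Lipschitz bound on D
  set L : ℝ := (2 * M + 1) / (3 * δ) with hLdef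
  have hL : 0 < L := by positivity
  have F5 : ∀ n, N ≤ n → ∀ x ∈ D, ∀ y ∈ D, dist (h n x) (h n y) ≤ L * dist x y := by
    intro n hn x hx y hy
    have hball3 : Metric.ball y (3 * δ) ⊆ Metric.ball (0:ℂ) R := by
      intro p hp
      apply hsub
      rw [Metric.mem_ball] at hp ⊢
      have h1 : dist y z₀ ≤ δ := Metric.mem_closedBall.mp hy
      calc dist p z₀ ≤ dist p y + dist y z₀ := dist_triangle _ _ _
      _ < 3 * δ + δ := by linarith
      _ ≤ ρ := by rw [hδdef]; linarith
    have hmaps : Set.MapsTo (h n) (Metric.ball y (3 * δ)) (Metric.ball (h n y) (2 * M + 1)) := by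
      intro p hp
      rw [Metric.mem_ball]
      calc dist (h n p) (h n y) ≤ ‖h n p‖ + ‖h n y‖ := by
            rw [dist_eq_norm]; exact norm_sub_le _ _
      _ ≤ M + M := add_le_add (F3 n hn p (hball3 hp)) (F3 n hn y (hDsub hy))
      _ < 2 * M + 1 := by linarith
    have hxmem : x ∈ Metric.ball y (3 * δ) := by
      rw [Metric.mem_ball]
      calc dist x y ≤ dist x z₀ + dist z₀ y := dist_triangle _ _ _
      _ ≤ δ + δ := add_le_add (Metric.mem_closedBall.mp hx)
            (by rw [dist_comm]; exact Metric.mem_closedBall.mp hy)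
      _ < 3 * δ := by linarith
    have := Complex.dist_le_div_mul_dist_of_mapsTo_ball
      ((F4 n hn).mono hball3) (hmaps.mono_right Metric.ball_subset_closedBall) hxmem
    rwa [hLdef]
  -- the compact function space setup
  haveI : CompactSpace D := isCompact_iff_compactSpace.mp (isCompact_closedBall _ _)
  set Lnn : NNReal := Real.toNNReal L with hLnndef
  have hLnncoe : (Lnn : ℝ) = L := Real.coe_toNNReal L hL.le
  set S : Set C(D, ℂ) := {φ | (∀ x, ‖φ x‖ ≤ M) ∧ LipschitzWith Lnn φ} with hSdef
  have hT : ContinuousMap.toFun '' S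
      = {g : D → ℂ | (∀ x, ‖g x‖ ≤ M) ∧ LipschitzWith Lnn g} := by
    ext g
    constructor
    · rintro ⟨φ, hφ, rfl⟩
      exact hφ
    · rintro ⟨hg1, hg2⟩
      exact ⟨⟨g, hg2.continuous⟩, ⟨hg1, hg2⟩, rfl⟩
  have hTcompact : IsCompact (ContinuousMap.toFun '' S) := by
    rw [hT]
    apply IsCompact.of_isClosed_subset
      (isCompact_univ_pi (fun _ : D => isCompact_closedBall (0:ℂ) M))
    · have : {g : D → ℂ | (∀ x, ‖g x‖ ≤ M) ∧ LipschitzWith Lnn g}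
          = (⋂ x : D, {g : D → ℂ | ‖g x‖ ≤ M}) ∩
            ⋂ x : D, ⋂ y : D, {g : D → ℂ | dist (g x) (g y) ≤ Lnn * dist x y} := by
        ext g
        simp only [Set.mem_setOf_eq, Set.mem_inter_iff, Set.mem_iInter,
          lipschitzWith_iff_dist_le_mul]
      rw [this]
      apply IsClosed.inter
      · exact isClosed_iInter fun x =>
          isClosed_le ((continuous_apply x).norm) continuous_const
      · exact isClosed_iInter fun x => isClosed_iInter fun y =>
          isClosed_le (((continuous_apply x).dist (continuous_apply y))) continuous_const
    · rintro g ⟨hg1, _⟩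
      intro x _
      exact Metric.mem_closedBall.mpr (by rw [dist_zero_right]; exact hg1 x)
  have hSeq : Equicontinuous ((↑) : S → D → ℂ) := by
    apply Metric.equicontinuous_of_continuity_modulus (fun t => L * t)
    · have : Tendsto (fun t : ℝ => L * t) (nhds 0) (nhds (L * 0)) :=
        (continuous_const.mul continuous_id).tendsto 0
      simpa using this
    · intro x y φ
      have := φ.2.2.dist_le_mul x y
      rwa [hLnncoe] at this
  have hScompact : IsCompact S := ArzelaAscoli.isCompact_of_equicontinuous S hTcompact hSeq
  -- now prove Fatou membership
  refine ⟨Metric.ball z₀ δ, Metric.ball_mem_nhds z₀ hδ, ?_⟩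
  intro s hs
  set φ : ℕ → C(D, ℂ) := fun j =>
    ⟨fun x => h (s (j + N)) x, by
      apply ContinuousOn.comp_continuous
        ((F4 (s (j + N)) (le_trans (Nat.le_add_left N j) hs.le_apply)).continuousOn)
        continuous_subtype_val
      exact fun x => hDsub x.2⟩ with hφdef
  have hφS : ∀ j, φ j ∈ S := by
    intro j
    have hn : N ≤ s (j + N) := le_trans (Nat.le_add_left N j) hs.le_apply
    constructor
    · intro x
      exact F3 _ hn _ (hDsub x.2)
    · rw [lipschitzWith_iff_dist_le_mul]
      intro x y
      rw [hLnncoe]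
      exact F5 _ hn _ x.2 _ y.2
  obtain ⟨Φ, hΦS, t₀, ht₀, hconv⟩ := hScompact.tendsto_subseq hφS
  set g : ℂ → OnePoint ℂ := fun w =>
    if hw : w ∈ D then
      (if Φ ⟨w, hw⟩ = 0 then (none : OnePoint ℂ) else ((a + (Φ ⟨w, hw⟩)⁻¹ : ℂ) : OnePoint ℂ))
    else none with hgdef
  refine ⟨fun k => t₀ k + N, fun p q hpq => Nat.add_lt_add_right (ht₀ hpq) N, g, ?_⟩
  intro K hKU hKc ε hε
  set C : ℝ := 4 * (1 + ‖a‖ ^ 2) with hCdef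
  have hC : 0 < C := by positivity
  have hconv' : ∀ᶠ k in atTop, dist (φ (t₀ k)) Φ < ε / C := by
    have := Metric.tendsto_atTop.mp hconv (ε / C) (by positivity)
    obtain ⟨K₀, hK₀⟩ := this
    exact eventually_atTop.mpr ⟨K₀, fun k hk => hK₀ k hk⟩
  filter_upwards [hconv'] with k hk w hwK
  have hwD : w ∈ D := Metric.ball_subset_closedBall (hKU hwK)
  have hn : N ≤ s (t₀ k + N) := le_trans (Nat.le_add_left N _) hs.le_apply
  have hwR : w ∈ Metric.ball (0:ℂ) R := hDsub hwD
  set n := s (t₀ k + N) with hndef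
  have hune : h n w ≠ 0 := inv_ne_zero (F2 n hn w hwR)
  have hiter : (f^[n] w : ℂ) = a + (h n w)⁻¹ := by
    rw [hhdef]
    simp only [inv_inv]
    ring
  have hgw : g w = (if Φ ⟨w, hwD⟩ = 0 then (none : OnePoint ℂ)
      else ((a + (Φ ⟨w, hwD⟩)⁻¹ : ℂ) : OnePoint ℂ)) := by
    rw [hgdef]
    exact dif_pos hwD
  have hest := key_est a (Φ ⟨w, hwD⟩) hune
  have hdistle : ‖h n w - Φ ⟨w, hwD⟩‖ ≤ dist (φ (t₀ k)) Φ := by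
    have h1 : dist (φ (t₀ k) ⟨w, hwD⟩) (Φ ⟨w, hwD⟩) ≤ dist (φ (t₀ k)) Φ :=
      ContinuousMap.dist_apply_le_dist _
    rw [dist_eq_norm] at h1
    exact h1
  calc sphericalDist ((f^[s ((fun k => t₀ k + N) k)] w : ℂ) : OnePoint ℂ) (g w)
      = sphericalDist ((a + (h n w)⁻¹ : ℂ) : OnePoint ℂ)
        (if Φ ⟨w, hwD⟩ = 0 then (none : OnePoint ℂ)
          else ((a + (Φ ⟨w, hwD⟩)⁻¹ : ℂ) : OnePoint ℂ)) := by
        rw [hgw, ← hiter]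
        rfl
  _ ≤ C * ‖h n w - Φ ⟨w, hwD⟩‖ := hest
  _ ≤ C * (dist (φ (t₀ k)) Φ) := by
        exact mul_le_mul_of_nonneg_left hdistle hC.le
  _ < C * (ε / C) := by
        exact mul_lt_mul_of_pos_left hk hC
  _ = ε := by field_simp


/-- If `V` is an unbounded, non-periodic Fatou component of a transcendental entire
function `f`, and the disc `B(0,R)` meets the Julia set, then infinitely many distinct
preimage components of `V` meet `B(0,R)`. -/
theorem infinitely_many_preimages_meet_ball (f : ℂ → ℂ) (hf : TranscendentalEntire f)
    (V : Set ℂ) (hV : IsFatouComponent f V) (hVunb : ¬ IsBounded V)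
    (hnp : ∀ n : ℕ, 1 ≤ n → ¬ f^[n] '' V ⊆ V)
    (R : ℝ) (hR : 0 < R) (hJR : (Metric.ball (0 : ℂ) R ∩ JuliaSet f).Nonempty) :
    {W : Set ℂ |
      (∃ n : ℕ, 1 ≤ n ∧ ∃ z ∈ f^[n] ⁻¹' V, W = connectedComponentIn (f^[n] ⁻¹' V) z) ∧
      (W ∩ Metric.ball (0 : ℂ) R).Nonempty}.Infinite := by
  classical
  obtain ⟨hdiff, hnotpoly⟩ := hf
  have han : AnalyticOnNhd ℂ f Set.univ :=
    hdiff.differentiableOn.analyticOnNhd isOpen_univ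
  have hop : ∀ s : Set ℂ, IsOpen s → IsOpen (f '' s) := by
    rcases han.is_constant_or_isOpen isPreconnected_univ with ⟨w, hw⟩ | hopen
    · exact absurd ⟨Polynomial.C w, fun z => by rw [Polynomial.eval_C]; exact hw z trivial⟩
        hnotpoly
    · exact fun s hs => hopen s (Set.subset_univ s) hs
  have hfwd : ∀ p : ℕ, ∀ x ∈ FatouSet f, f^[p] x ∈ FatouSet f := by
    intro p
    induction p with
    | zero => simp
    | succ p ih =>
      intro x hx
      rw [Function.iterate_succ_apply']
      exact fatou_fwd f hdiff hop ⟨_, ih x hx, rfl⟩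
  obtain ⟨zV, hzV, hVeq⟩ := hV
  have hVsubF : V ⊆ FatouSet f := hVeq ▸ connectedComponentIn_subset _ _
  have hVopen : IsOpen V := by
    rw [hVeq]
    exact (fatou_isOpen f).connectedComponentIn
  have hzVV : zV ∈ V := hVeq ▸ mem_connectedComponentIn hzV
  obtain ⟨r, hr, hball⟩ := Metric.isOpen_iff.mp hVopen zV hzVV
  obtain ⟨z₀, hz₀B, hz₀J⟩ := hJR
  set A : Set ℕ := {n | 1 ≤ n ∧ ∃ w ∈ Metric.ball (0:ℂ) R, f^[n] w ∈ V} with hAdef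
  have hAinf : A.Infinite := by
    by_contra hfin
    rw [Set.not_infinite] at hfin
    obtain ⟨N, hN⟩ := hfin.bddAbove
    have : z₀ ∈ FatouSet f := by
      apply mem_fatou_of_omits f hdiff hr (N + 1) hz₀B
      intro n hn w hw hcon
      have hmem : n ∈ A := ⟨by omega, w, hw, hball hcon⟩
      have := hN hmem
      omega
    exact hz₀J this
  have hch : ∀ n ∈ A, ∃ w, w ∈ Metric.ball (0:ℂ) R ∧ f^[n] w ∈ V := by
    rintro n ⟨-, w, hw1, hw2⟩
    exact ⟨w, hw1, hw2⟩
  choose! wfun hw1 hw2 using hch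
  set Wfun : ℕ → Set ℂ := fun n => connectedComponentIn (f^[n] ⁻¹' V) (wfun n) with hWdef
  have key : ∀ n ∈ A, ∀ m ∈ A, n < m → Wfun n ≠ Wfun m := by
    intro n hn m hm hlt heq
    have hwm : wfun m ∈ Wfun m := mem_connectedComponentIn (Set.mem_preimage.mpr (hw2 m hm))
    rw [← heq] at hwm
    have h1 : f^[n] (wfun m) ∈ V :=
      Set.mem_preimage.mp (connectedComponentIn_subset _ _ hwm)
    set p := m - n with hp
    have hp1 : 1 ≤ p := by omega
    have hpre : IsPreconnected (f^[p] '' V) := by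
      apply IsPreconnected.image _ _ ((hdiff.iterate p).continuous.continuousOn)
      rw [hVeq]
      exact isPreconnected_connectedComponentIn
    have hsubF : f^[p] '' V ⊆ FatouSet f := by
      rintro _ ⟨x, hx, rfl⟩
      exact hfwd p x (hVsubF hx)
    have hxim : f^[m] (wfun m) ∈ f^[p] '' V := by
      have : f^[m] (wfun m) = f^[p] (f^[n] (wfun m)) := by
        rw [← Function.iterate_add_apply]
        congr 1
        omega
      rw [this]
      exact Set.mem_image_of_mem _ h1
    have hxV : f^[m] (wfun m) ∈ V := hw2 m hm
    have hsub2 : f^[p] '' V ⊆ connectedComponentIn (FatouSet f) (f^[m] (wfun m)) :=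
      hpre.subset_connectedComponentIn hxim hsubF
    have hVeq2 : V = connectedComponentIn (FatouSet f) (f^[m] (wfun m)) := by
      rw [hVeq]
      exact connectedComponentIn_eq (by rw [← hVeq]; exact hxV)
    exact hnp p hp1 (hVeq2 ▸ hsub2)
  apply Set.infinite_of_injOn_mapsTo (f := Wfun) (s := A) ?_ ?_ hAinf
  · intro n hn m hm heq
    rcases lt_trichotomy n m with h | h | h
    · exact absurd heq (key n hn m hm h)
    · exact h
    · exact absurd heq.symm (key m hm n hn h)
  · intro n hn
    have hwpre : wfun n ∈ f^[n] ⁻¹' V := Set.mem_preimage.mpr (hw2 n hn)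
    exact ⟨⟨n, hn.1, wfun n, hwpre, rfl⟩,
      ⟨wfun n, mem_connectedComponentIn hwpre, hw1 n hn⟩⟩

end
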